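/- arXiv:2303.00160 — 3 statements merged into one kernel-verified Lean document; each statement's English description precedes it below -/
import Mathlib

section
/- Fix dimensions n_x, n_ψ, n_θ ≥ 1 and indices i ∈ {1,…,n_ψ}, j ∈ {1,…,n_θ}. Let Ψ = ∏_{k=1}^{n_ψ} [a_k, b_k] be a compact box in ℝ^{n_ψ} with a_k < b_k for all k. Let p : ℝ^{n_x} × ℝ^{n_ψ} → ℝ be nonnegative, let θ̂ : ℝ^{n_x} → ℝ^{n_θ} be measurable, and let θ₀ : ℝ^{n_ψ} → ℝ^{n_θ} be continuously differentiable on Ψ. Assume: (i) for each x, the function ψ ↦ p(x, ψ) is continuous on Ψ with continuous partial derivative ∂p/∂ψ_i, and p(x, ψ) = 0 whenever ψ_i = a_i or ψ_i = b_i; (ii) the functions (x, ψ) ↦ θ̂_j(x) ∂p/∂ψ_i(x, ψ), (x, ψ) ↦ θ_{0,j}(ψ) ∂p/∂ψ_i(x, ψ), and (x, ψ) ↦ (∂θ_{0,j}/∂ψ_i)(ψ) p(x, ψ) are integrable on ℝ^{n_x} × Ψ. Then ∫_{ℝ^{n_x}} ∫_Ψ (θ̂_j(x) − θ_{0,j}(ψ))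 (∂p/∂ψ_i)(x, ψ) dψ dx = ∫_{ℝ^{n_x}} ∫_Ψ (∂θ_{0,j}/∂ψ_i)(ψ) p(x, ψ) dψ dx. -/
open MeasureTheory

/-- If `g` is the partial derivative of `h` in coordinate `i` on the box, and `h`
vanishes on the two faces in coordinate `i`, then the integral of `g` over the box is zero. -/
lemma key_slice {m : ℕ} (i : Fin (m + 1)) (a b : Fin (m + 1) → ℝ) (hab : ∀ k, a k ≤ b k)
    (g h : (Fin (m + 1) → ℝ) → ℝ)
    (hg_int : IntegrableOn g (Set.Icc a b))
    (hg_slice : ∀ y ∈ Set.Icc (fun j => a (i.succAbove j)) (fun j => b (i.succAbove j)),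
      IntervalIntegrable (fun t => g (i.insertNth t y)) volume (a i) (b i))
    (hderiv : ∀ ψ ∈ Set.Icc a b,
      HasDerivAt (fun t => h (Function.update ψ i t)) (g ψ) (ψ i))
    (hvanish : ∀ ψ ∈ Set.Icc a b, (ψ i = a i ∨ ψ i = b i) → h ψ = 0) :
    ∫ ψ in Set.Icc a b, g ψ = 0 := by
  set e := MeasurableEquiv.piFinSuccAbove (fun _ : Fin (m + 1) => ℝ) i with he
  have hmp : MeasurePreserving e volume volume := volume_preserving_piFinSuccAbove _ i
  have hmps : MeasurePreserving e.symm volume volume := hmp.symm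
  have hemb : MeasurableEmbedding e.symm := e.symm.measurableEmbedding
  have hsymm : ∀ z : ℝ × (Fin m → ℝ), e.symm z = i.insertNth z.1 z.2 := by
    intro z; simp [he, MeasurableEquiv.piFinSuccAbove, Fin.insertNthEquiv]
  have hpre : e.symm ⁻¹' Set.Icc a b
      = Set.Icc (a i) (b i) ×ˢ Set.Icc (fun j => a (i.succAbove j)) (fun j => b (i.succAbove j)) := by
    ext z
    simp only [Set.mem_preimage, hsymm, Fin.insertNth_mem_Icc, Set.mem_prod]
  have h1 : ∫ ψ in Set.Icc a b, g ψ = ∫ z in e.symm ⁻¹' Set.Icc a b, g (e.symm z) :=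
    (hmps.setIntegral_preimage_emb hemb g _).symm
  rw [h1, hpre]
  have hint' : Integrable (fun z : ℝ × (Fin m → ℝ) => g (e.symm z))
      ((volume.restrict (Set.Icc (a i) (b i))).prod
        (volume.restrict (Set.Icc (fun j => a (i.succAbove j)) (fun j => b (i.succAbove j))))) := by
    rw [Measure.prod_restrict, ← Measure.volume_eq_prod, ← hpre]
    exact (hmps.restrict_preimage_emb hemb _).integrable_comp_emb hemb |>.mpr hg_int
  rw [show (volume : Measure (ℝ × (Fin m → ℝ))) = (volume : Measure ℝ).prod volume from
    Measure.volume_eq_prod ℝ (Fin m → ℝ), ← Measure.prod_restrict]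
  rw [integral_prod_symm _ hint']
  rw [show (fun y => ∫ t in Set.Icc (a i) (b i), g (e.symm (t, y))) = fun y => ∫ t in Set.Icc (a i) (b i), g (i.insertNth t y) from funext fun y => by simp only [hsymm]]
  refine (setIntegral_congr_fun measurableSet_Icc fun y hy => ?_).trans (integral_zero _ _)
  -- inner integral vanishes by FTC
  have hymem : ∀ t ∈ Set.Icc (a i) (b i), i.insertNth t y ∈ Set.Icc a b := fun t ht =>
    Fin.insertNth_mem_Icc.2 ⟨ht, hy⟩
  have hd : ∀ t ∈ Set.uIcc (a i) (b i),
      HasDerivAt (fun s => h (i.insertNth s y)) (g (i.insertNth t y)) t := by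
    intro t ht
    rw [Set.uIcc_of_le (hab i)] at ht
    have := hderiv _ (hymem t ht)
    simpa [Fin.update_insertNth, Fin.insertNth_apply_same] using this
  have hftc := intervalIntegral.integral_eq_sub_of_hasDerivAt hd (hg_slice y hy)
  have hb0 : h (i.insertNth (b i) y) = 0 :=
    hvanish _ (hymem _ (Set.right_mem_Icc.2 (hab i))) (Or.inr (Fin.insertNth_apply_same ..))
  have ha0 : h (i.insertNth (a i) y) = 0 :=
    hvanish _ (hymem _ (Set.left_mem_Icc.2 (hab i))) (Or.inl (Fin.insertNth_apply_same ..))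
  rw [MeasureTheory.integral_Icc_eq_integral_Ioc, ← intervalIntegral.integral_of_le (hab i),
    hftc, hb0, ha0, sub_zero]

/-- The intermediate identity in the proof of Theorem 1 of the paper, combining
Lemma 1 and Lemma 2: for the true joint density `p` of data `x` and parameter `ψ`
(supported in the box and vanishing on its two faces in the `i`-th coordinate),
an estimator `θ̂` and the pseudotrue map `θ₀`,
`∫∫ (θ̂_j(x) − θ_{0,j}(ψ)) ∂p/∂ψ_i dψ dx = ∫∫ (∂θ_{0,j}/∂ψ_i) p dψ dx`. -/
theorem stmt_5 (nx nψ nθ : ℕ) (hnx : 1 ≤ nx) (hnψ : 1 ≤ nψ) (hnθ : 1 ≤ nθ)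
    (i : Fin nψ) (j : Fin nθ) (a b : Fin nψ → ℝ) (hab : ∀ k, a k < b k)
    (p : (Fin nx → ℝ) → (Fin nψ → ℝ) → ℝ)
    (dp : (Fin nx → ℝ) → (Fin nψ → ℝ) → ℝ)
    (θhat : (Fin nx → ℝ) → Fin nθ → ℝ)
    (θ0 : (Fin nψ → ℝ) → Fin nθ → ℝ)
    (dθ0 : (Fin nψ → ℝ) → ℝ)
    (hp_nonneg : ∀ x ψ, 0 ≤ p x ψ)
    (hθhat_meas : Measurable θhat)
    (hθ0_smooth : ContDiffOn ℝ 1 θ0 (Set.Icc a b))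
    (hθ0_deriv : ∀ ψ ∈ Set.Icc a b,
      HasDerivAt (fun t => θ0 (Function.update ψ i t) j) (dθ0 ψ) (ψ i))
    -- (i) regularity of the joint density in the `i`-th coordinate, and vanishing
    -- on the two faces of the box in the `i`-th coordinate
    (hp_cont : ∀ x, ContinuousOn (p x) (Set.Icc a b))
    (hp_deriv : ∀ x, ∀ ψ ∈ Set.Icc a b,
      HasDerivAt (fun t => p x (Function.update ψ i t)) (dp x ψ) (ψ i))
    (hdp_cont : ∀ x, ContinuousOn (dp x) (Set.Icc a b))
    (hvanish : ∀ x, ∀ ψ ∈ Set.Icc a b, (ψ i = a i ∨ ψ i = b i) → p x ψ = 0)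
    -- (ii) integrability on ℝ^{n_x} × Ψ
    (hint1 : Integrable (fun z : (Fin nx → ℝ) × (Fin nψ → ℝ) => θhat z.1 j * dp z.1 z.2)
      ((volume : Measure (Fin nx → ℝ)).prod (volume.restrict (Set.Icc a b))))
    (hint2 : Integrable (fun z : (Fin nx → ℝ) × (Fin nψ → ℝ) => θ0 z.2 j * dp z.1 z.2)
      ((volume : Measure (Fin nx → ℝ)).prod (volume.restrict (Set.Icc a b))))
    (hint3 : Integrable (fun z : (Fin nx → ℝ) × (Fin nψ → ℝ) => dθ0 z.2 * p z.1 z.2)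
      ((volume : Measure (Fin nx → ℝ)).prod (volume.restrict (Set.Icc a b)))) :
    ∫ x : Fin nx → ℝ, ∫ ψ in Set.Icc a b, (θhat x j - θ0 ψ j) * dp x ψ
      = ∫ x : Fin nx → ℝ, ∫ ψ in Set.Icc a b, dθ0 ψ * p x ψ := by
  obtain ⟨m, rfl⟩ : ∃ m, nψ = m + 1 := ⟨nψ - 1, by omega⟩
  have habs : ∀ k, a k ≤ b k := fun k => (hab k).le
  have hθ0c : ContinuousOn (fun ψ => θ0 ψ j) (Set.Icc a b) :=
    (continuous_apply j).comp_continuousOn hθ0_smooth.continuousOn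
  have hθ0j : ContDiffOn ℝ 1 (fun ψ => θ0 ψ j) (Set.Icc a b) :=
    (ContinuousLinearMap.proj j (R := ℝ) (φ := fun _ : Fin nθ => ℝ)).contDiff.comp_contDiffOn
      hθ0_smooth
  -- a.e. x slice integrability of dθ0 * p
  have hae : ∀ᵐ x : Fin nx → ℝ,
      IntegrableOn (fun ψ => dθ0 ψ * p x ψ) (Set.Icc a b) := hint3.prod_right_ae
  refine integral_congr_ae ?_
  filter_upwards [hae] with x hx
  have hA : IntegrableOn (fun ψ => (θhat x j - θ0 ψ j) * dp x ψ) (Set.Icc a b) :=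
    ((continuousOn_const.sub hθ0c).mul (hdp_cont x)).integrableOn_compact isCompact_Icc
  rw [← sub_eq_zero, ← integral_sub hA hx]
  refine key_slice i a b habs _ (fun ψ => (θhat x j - θ0 ψ j) * p x ψ) (hA.sub hx) ?_ ?_ ?_
  · -- slice interval integrability
    intro y hy
    set φ : ℝ → (Fin (m + 1) → ℝ) := fun t => i.insertNth t y with hφ
    have hφc : Continuous φ := by
      have : φ = fun t : ℝ => Function.update (i.insertNth (0:ℝ) y) i t := by
        funext t; rw [Fin.update_insertNth]
      rw [this]; exact (contDiff_update (𝕜 := ℝ) (F' := fun _ : Fin (m+1) => ℝ) 1 _ i).continuous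
    have hmaps : Set.MapsTo φ (Set.Icc (a i) (b i)) (Set.Icc a b) := fun t ht =>
      Fin.insertNth_mem_Icc.2 ⟨ht, hy⟩
    have hφcd : ContDiff ℝ 1 φ := by
      have : φ = fun t : ℝ => Function.update (i.insertNth (0:ℝ) y) i t := by
        funext t; rw [Fin.update_insertNth]
      rw [this]; exact contDiff_update (𝕜 := ℝ) (F' := fun _ : Fin (m+1) => ℝ) 1 _ i
    have hud : UniqueDiffOn ℝ (Set.Icc (a i) (b i)) := uniqueDiffOn_Icc (hab i)
    have hscd : ContDiffOn ℝ 1 (fun t => θ0 (φ t) j) (Set.Icc (a i) (b i)) :=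
      hθ0j.comp hφcd.contDiffOn hmaps
    have hdθcont : ContinuousOn (fun t => dθ0 (φ t)) (Set.Icc (a i) (b i)) := by
      refine (hscd.continuousOn_derivWithin hud le_rfl).congr ?_
      intro t ht
      have hdAt : HasDerivAt (fun s => θ0 (φ s) j) (dθ0 (φ t)) t := by
        have := hθ0_deriv (φ t) (hmaps ht)
        simpa [hφ, Fin.update_insertNth, Fin.insertNth_apply_same] using this
      exact (hdAt.hasDerivWithinAt.derivWithin (hud t ht)).symm
    have c1 : ContinuousOn (fun t => (θhat x j - θ0 (φ t) j) * dp x (φ t))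
        (Set.Icc (a i) (b i)) :=
      (continuousOn_const.sub (hθ0c.comp hφc.continuousOn hmaps)).mul
        ((hdp_cont x).comp hφc.continuousOn hmaps)
    have c2 : ContinuousOn (fun t => dθ0 (φ t) * p x (φ t)) (Set.Icc (a i) (b i)) :=
      hdθcont.mul ((hp_cont x).comp hφc.continuousOn hmaps)
    apply ContinuousOn.intervalIntegrable
    rw [Set.uIcc_of_le (habs i)]
    exact c1.sub c2
  · -- derivative identity
    intro ψ hψ
    have h1 := hθ0_deriv ψ hψ
    have h2 := hp_deriv x ψ hψ
    have h3 := ((hasDerivAt_const (ψ i) (θhat x j)).sub h1).mul h2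
    have h4 : Function.update ψ i (ψ i) = ψ := Function.update_eq_self i ψ
    rw [h4] at h3
    refine h3.congr_deriv ?_
    simp only [Pi.sub_apply, h4]
    ring
  · -- vanishing on the faces
    intro ψ hψ hor
    show (θhat x j - θ0 ψ j) * p x ψ = 0
    rw [hvanish x ψ hψ hor, mul_zero]
end

section
/- Fix dimensions n_x, n_ψ, n_θ ≥ 1. Let Ψ = ∏_{k=1}^{n_ψ} [a_k, b_k] be a compact box in ℝ^{n_ψ} with a_k < b_k for all k. Let p : ℝ^{n_x} × ℝ^{n_ψ} → ℝ be nonnegative, let θ̂ : ℝ^{n_x} → ℝ^{n_θ} be measurable, let θ₀ : ℝ^{n_ψ} → ℝ^{n_θ} be continuously differentiable on Ψ with Jacobian matrix Dθ₀(ψ) ∈ ℝ^{n_θ × n_ψ}, and let s : ℝ^{n_x} × ℝ^{n_ψ} → ℝ^{n_ψ} be measurable. Assume: (i) for each x and each i, ψ ↦ p(x, ψ) is continuous on Ψ with continuous partial derivative ∂p/∂ψ_i, and p(x, ψ) = 0 whenever ψ_i = a_i or ψ_i = b_i; (ii) ∂p/∂ψ_i(x, ψ) = s_i(x, ψ) p(x,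 ψ) for all (x, ψ) ∈ ℝ^{n_x} × Ψ and all i (s is the score ∂/∂ψ ln p where p > 0); (iii) all entries of (θ̂(x) − θ₀(ψ))(θ̂(x) − θ₀(ψ))ᵀ p(x, ψ), (θ̂(x) − θ₀(ψ)) s(x, ψ)ᵀ p(x, ψ), s(x, ψ) s(x, ψ)ᵀ p(x, ψ), and Dθ₀(ψ) p(x, ψ) are integrable on ℝ^{n_x} × Ψ. Define E = ∫∫ (θ̂(x) − θ₀(ψ))(θ̂(x) − θ₀(ψ))ᵀ p(x, ψ) dψ dx, T = ∫∫ Dθ₀(ψ) p(x, ψ) dψ dx, and J = ∫∫ s(x, ψ) s(x, ψ)ᵀ p(x, ψ) dψ dx, and assume J is positive definite. Then E − T J⁻¹ Tᵀ is positive semidefinite. -/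
open Matrix MeasureTheory Set

private lemma box_ftc {m : ℕ} (a b : Fin (m+1) → ℝ) (hab : ∀ k, a k ≤ b k) (i : Fin (m+1))
    (g dg : (Fin (m+1) → ℝ) → ℝ)
    (hdg_cont : ContinuousOn dg (Set.Icc a b))
    (hderiv : ∀ ψ ∈ Set.Icc a b, HasDerivAt (fun t => g (Function.update ψ i t)) (dg ψ) (ψ i))
    (hvan : ∀ ψ ∈ Set.Icc a b, (ψ i = a i ∨ ψ i = b i) → g ψ = 0) :
    ∫ ψ in Set.Icc a b, dg ψ = 0 := by
  set e : ℝ × (Fin m → ℝ) ≃ᵐ (Fin (m+1) → ℝ) :=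
    (MeasurableEquiv.piFinSuccAbove (fun _ => ℝ) i).symm with he_def
  have hem : MeasurePreserving e :=
    (volume_preserving_piFinSuccAbove (fun _ : Fin (m+1) => ℝ) i).symm _
  have heI : (e ⁻¹' Set.Icc a b)
      = Set.Icc (a i) (b i) ×ˢ Set.Icc (a ∘ i.succAbove) (b ∘ i.succAbove) :=
    ((Fin.insertNthOrderIso (fun _ => ℝ) i).preimage_Icc a b).trans (Icc_prod_eq _ _)
  have hint : IntegrableOn dg (Set.Icc a b) := hdg_cont.integrableOn_compact isCompact_Icc
  have key : ∫ ψ in Set.Icc a b, dg ψ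
      = ∫ z in Set.Icc (a i) (b i) ×ˢ Set.Icc (a ∘ i.succAbove) (b ∘ i.succAbove),
          dg (e z) ∂(volume.prod volume) := by
    rw [← heI, ← Measure.volume_eq_prod,
      hem.setIntegral_preimage_emb e.measurableEmbedding]
  have hint2 : Integrable (fun z => dg (e z))
      (((volume : Measure ℝ).restrict (Set.Icc (a i) (b i))).prod
        ((volume : Measure (Fin m → ℝ)).restrict (Set.Icc (a ∘ i.succAbove) (b ∘ i.succAbove)))) := by
    rw [Measure.prod_restrict, ← heI]
    exact (hem.integrableOn_comp_preimage e.measurableEmbedding).2 hint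
  have he_app : ∀ (t : ℝ) (y : Fin m → ℝ), e (t, y) = i.insertNth t y := fun _ _ => rfl
  rw [key, ← Measure.prod_restrict, integral_prod_symm _ hint2]
  simp only [he_app]
  have hzero : ∀ y ∈ Set.Icc (a ∘ i.succAbove) (b ∘ i.succAbove),
      (∫ t in Set.Icc (a i) (b i), dg (i.insertNth t y)) = 0 := by
    intro y hy
    have hmem : ∀ t ∈ Set.Icc (a i) (b i), i.insertNth t y ∈ Set.Icc a b := by
      intro t ht
      exact Fin.insertNth_mem_Icc.2 ⟨ht, hy⟩
    have hconte : Continuous fun t : ℝ => (i.insertNth t y : Fin (m+1) → ℝ) :=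
      (continuous_id : Continuous fun t : ℝ => t).finInsertNth i continuous_const
    have hderiv' : ∀ t ∈ Set.uIcc (a i) (b i),
        HasDerivAt (fun t' => g (i.insertNth t' y)) (dg (i.insertNth t y)) t := by
      intro t ht
      rw [Set.uIcc_of_le (hab i)] at ht
      have h := hderiv (i.insertNth t y) (hmem t ht)
      rw [Fin.insertNth_apply_same] at h
      convert h using 2 with t'
      rw [Fin.update_insertNth]
    have hii : IntervalIntegrable (fun t => dg (i.insertNth t y)) volume (a i) (b i) := by
      apply ContinuousOn.intervalIntegrable
      rw [Set.uIcc_of_le (hab i)]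
      exact hdg_cont.comp hconte.continuousOn hmem
    have hftc := intervalIntegral.integral_eq_sub_of_hasDerivAt hderiv' hii
    have hIoc : ∫ t in Set.Icc (a i) (b i), dg (i.insertNth t y)
        = ∫ t in (a i)..(b i), dg (i.insertNth t y) := by
      rw [intervalIntegral.integral_of_le (hab i),
        setIntegral_congr_set Ioc_ae_eq_Icc.symm]
    rw [hIoc, hftc,
      hvan _ (hmem (b i) (Set.right_mem_Icc.2 (hab i))) (by rw [Fin.insertNth_apply_same]; right; rfl),
      hvan _ (hmem (a i) (Set.left_mem_Icc.2 (hab i))) (by rw [Fin.insertNth_apply_same]; left; rfl),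
      sub_zero]
  calc (∫ y in Set.Icc (a ∘ i.succAbove) (b ∘ i.succAbove),
        ∫ t in Set.Icc (a i) (b i), dg (i.insertNth t y))
      = ∫ _y in Set.Icc (a ∘ i.succAbove) (b ∘ i.succAbove), (0:ℝ) :=
        setIntegral_congr_fun measurableSet_Icc fun y hy => hzero y hy
    _ = 0 := by simp

private lemma integral_sum_mul_sum_mul {ι : Type*} [Fintype ι] {α : Type*} [MeasurableSpace α]
    (μ : Measure α) (c : ι → ℝ) (v : ι → α → ℝ) (p : α → ℝ)
    (hint : ∀ i j : ι, Integrable (fun z => v i z * v j z * p z) μ) :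
    ∫ z, (∑ i, c i * v i z) * (∑ j, c j * v j z) * p z ∂μ
      = ∑ i, ∑ j, c i * c j * ∫ z, v i z * v j z * p z ∂μ := by
  have hiden : ∀ z, (∑ i, c i * v i z) * (∑ j, c j * v j z) * p z
      = ∑ i, ∑ j, (c i * c j) * (v i z * v j z * p z) := by
    intro z
    rw [Finset.sum_mul_sum, Finset.sum_mul]
    refine Finset.sum_congr rfl fun i _ => ?_
    rw [Finset.sum_mul]
    refine Finset.sum_congr rfl fun j _ => ?_
    ring
  simp_rw [hiden]
  rw [integral_finset_sum _ (fun i _ =>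
    integrable_finset_sum _ (fun j _ => (hint i j).const_mul _))]
  refine Finset.sum_congr rfl fun i _ => ?_
  rw [integral_finset_sum _ (fun j _ => (hint i j).const_mul _)]
  refine Finset.sum_congr rfl fun j _ => ?_
  rw [integral_const_mul]
/-- Theorem 1 of the paper: the Misspecified Bayesian Cramér–Rao Bound (MBCRB).
With `p` the true joint density of data `x` and parameter `ψ` supported in the
compact box (vanishing on each pair of opposite faces), `θ₀` the pseudotrue
parameter map with Jacobian `D`, `θ̂` an estimator, `s` the Bayesian score of the
true joint density, `E` the error covariance of `θ̂` about the pseudotrue, `T` the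
expected Jacobian and `J` the (positive definite) Bayesian Fisher Information
Matrix, the matrix `E − T J⁻¹ Tᵀ` is positive semidefinite. -/
theorem stmt_6 (nx nψ nθ : ℕ) (hnx : 1 ≤ nx) (hnψ : 1 ≤ nψ) (hnθ : 1 ≤ nθ)
    (a b : Fin nψ → ℝ) (hab : ∀ k, a k < b k)
    (p : (Fin nx → ℝ) → (Fin nψ → ℝ) → ℝ)
    (dp : (Fin nx → ℝ) → (Fin nψ → ℝ) → Fin nψ → ℝ)
    (θhat : (Fin nx → ℝ) → Fin nθ → ℝ)
    (θ0 : (Fin nψ → ℝ) → Fin nθ → ℝ)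
    (D : (Fin nψ → ℝ) → Matrix (Fin nθ) (Fin nψ) ℝ)
    (s : (Fin nx → ℝ) → (Fin nψ → ℝ) → Fin nψ → ℝ)
    (hp_nonneg : ∀ x ψ, 0 ≤ p x ψ)
    (hθhat_meas : Measurable θhat)
    (hs_meas : Measurable fun z : (Fin nx → ℝ) × (Fin nψ → ℝ) => s z.1 z.2)
    -- θ₀ is continuously differentiable on the box, with Jacobian matrix D
    (hθ0_smooth : ContDiffOn ℝ 1 θ0 (Set.Icc a b))
    (hθ0_deriv : ∀ ψ ∈ Set.Icc a b, ∀ i : Fin nψ,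
      HasDerivAt (fun t => θ0 (Function.update ψ i t)) (fun j => D ψ j i) (ψ i))
    (hD_cont : ContinuousOn D (Set.Icc a b))
    -- (i) regularity of the joint density and vanishing on the faces of the box
    (hp_cont : ∀ x, ContinuousOn (p x) (Set.Icc a b))
    (hp_deriv : ∀ x, ∀ ψ ∈ Set.Icc a b, ∀ i : Fin nψ,
      HasDerivAt (fun t => p x (Function.update ψ i t)) (dp x ψ i) (ψ i))
    (hdp_cont : ∀ x, ∀ i : Fin nψ, ContinuousOn (fun ψ => dp x ψ i) (Set.Icc a b))
    (hvanish : ∀ x, ∀ ψ ∈ Set.Icc a b, ∀ i : Fin nψ,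
      (ψ i = a i ∨ ψ i = b i) → p x ψ = 0)
    -- (ii) `s` is the score of `p`
    (hscore : ∀ x, ∀ ψ ∈ Set.Icc a b, ∀ i : Fin nψ, dp x ψ i = s x ψ i * p x ψ)
    -- (iii) integrability of all matrix entries on ℝ^{n_x} × Ψ
    (hintE : ∀ (j k : Fin nθ),
      Integrable (fun z : (Fin nx → ℝ) × (Fin nψ → ℝ) =>
        (θhat z.1 j - θ0 z.2 j) * (θhat z.1 k - θ0 z.2 k) * p z.1 z.2)
      ((volume : Measure (Fin nx → ℝ)).prod (volume.restrict (Set.Icc a b))))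
    (hintCross : ∀ (j : Fin nθ) (i : Fin nψ),
      Integrable (fun z : (Fin nx → ℝ) × (Fin nψ → ℝ) =>
        (θhat z.1 j - θ0 z.2 j) * s z.1 z.2 i * p z.1 z.2)
      ((volume : Measure (Fin nx → ℝ)).prod (volume.restrict (Set.Icc a b))))
    (hintJ : ∀ (i i' : Fin nψ),
      Integrable (fun z : (Fin nx → ℝ) × (Fin nψ → ℝ) =>
        s z.1 z.2 i * s z.1 z.2 i' * p z.1 z.2)
      ((volume : Measure (Fin nx → ℝ)).prod (volume.restrict (Set.Icc a b))))
    (hintT : ∀ (j : Fin nθ) (i : Fin nψ),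
      Integrable (fun z : (Fin nx → ℝ) × (Fin nψ → ℝ) => D z.2 j i * p z.1 z.2)
      ((volume : Measure (Fin nx → ℝ)).prod (volume.restrict (Set.Icc a b))))
    (E : Matrix (Fin nθ) (Fin nθ) ℝ)
    (hE : E = Matrix.of fun j k => ∫ x : Fin nx → ℝ, ∫ ψ in Set.Icc a b,
      (θhat x j - θ0 ψ j) * (θhat x k - θ0 ψ k) * p x ψ)
    (T : Matrix (Fin nθ) (Fin nψ) ℝ)
    (hT : T = Matrix.of fun j i => ∫ x : Fin nx → ℝ, ∫ ψ in Set.Icc a b,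
      D ψ j i * p x ψ)
    (J : Matrix (Fin nψ) (Fin nψ) ℝ)
    (hJ : J = Matrix.of fun i i' => ∫ x : Fin nx → ℝ, ∫ ψ in Set.Icc a b,
      s x ψ i * s x ψ i' * p x ψ)
    (hJpd : J.PosDef) :
    (E - T * J⁻¹ * Tᵀ).PosSemidef := by
  obtain ⟨m, rfl⟩ : ∃ m, nψ = m + 1 := ⟨nψ - 1, (Nat.succ_pred_eq_of_pos hnψ).symm⟩
  set μ : Measure ((Fin nx → ℝ) × (Fin (m+1) → ℝ)) :=
    (volume : Measure (Fin nx → ℝ)).prod (volume.restrict (Set.Icc a b)) with hμ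
  have hab' : ∀ k, a k ≤ b k := fun k => (hab k).le
  have hθ0_cont : ContinuousOn θ0 (Set.Icc a b) := hθ0_smooth.continuousOn
  have hθ0j_cont : ∀ j, ContinuousOn (fun ψ => θ0 ψ j) (Set.Icc a b) :=
    fun j => (continuous_apply j).comp_continuousOn hθ0_cont
  have hDji_cont : ∀ (j : Fin nθ) (i : Fin (m+1)),
      ContinuousOn (fun ψ => D ψ j i) (Set.Icc a b) := by
    intro j i
    exact ((continuous_apply i).comp (continuous_apply j)).comp_continuousOn hD_cont
  -- matrix entries as integrals over the product measure
  have hE' : ∀ j k, E j k = ∫ z, (θhat z.1 j - θ0 z.2 j) * (θhat z.1 k - θ0 z.2 k) * p z.1 z.2 ∂μ := by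
    intro j k
    rw [hE]
    exact (integral_prod _ (hintE j k)).symm
  have hT' : ∀ j i, T j i = ∫ z, D z.2 j i * p z.1 z.2 ∂μ := by
    intro j i
    rw [hT]
    exact (integral_prod _ (hintT j i)).symm
  have hJ' : ∀ i i', J i i' = ∫ z, s z.1 z.2 i * s z.1 z.2 i' * p z.1 z.2 ∂μ := by
    intro i i'
    rw [hJ]
    exact (integral_prod _ (hintJ i i')).symm
  -- Step 1: the cross matrix equals T (integration by parts)
  have hC : ∀ (j : Fin nθ) (i : Fin (m+1)),
      (∫ z, (θhat z.1 j - θ0 z.2 j) * s z.1 z.2 i * p z.1 z.2 ∂μ) = T j i := by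
    intro j i
    rw [hT', integral_prod _ (hintCross j i), integral_prod _ (hintT j i)]
    refine integral_congr_ae (Filter.EventuallyEq.of_eq (funext fun x => ?_))
    -- fix x; compare inner integrals via FTC on the box
    have hcont1 : ContinuousOn (fun ψ => (θhat x j - θ0 ψ j) * dp x ψ i) (Set.Icc a b) :=
      (continuousOn_const.sub (hθ0j_cont j)).mul (hdp_cont x i)
    have hcont2 : ContinuousOn (fun ψ => D ψ j i * p x ψ) (Set.Icc a b) :=
      (hDji_cont j i).mul (hp_cont x)
    have hint1 : IntegrableOn (fun ψ => (θhat x j - θ0 ψ j) * dp x ψ i) (Set.Icc a b) :=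
      hcont1.integrableOn_compact isCompact_Icc
    have hint2 : IntegrableOn (fun ψ => D ψ j i * p x ψ) (Set.Icc a b) :=
      hcont2.integrableOn_compact isCompact_Icc
    have hftc : ∫ ψ in Set.Icc a b,
        ((θhat x j - θ0 ψ j) * dp x ψ i - D ψ j i * p x ψ) = 0 := by
      apply box_ftc a b hab' i (fun ψ => (θhat x j - θ0 ψ j) * p x ψ)
      · exact hcont1.sub hcont2
      · intro ψ hψ
        have h1 : HasDerivAt (fun t => θ0 (Function.update ψ i t) j) (D ψ j i) (ψ i) :=
          hasDerivAt_pi.1 (hθ0_deriv ψ hψ i) j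
        have h2 := hp_deriv x ψ hψ i
        have h3 : HasDerivAt (fun t => (θhat x j - θ0 (Function.update ψ i t) j) * p x (Function.update ψ i t))
            ((0 - D ψ j i) * p x (Function.update ψ i (ψ i))
              + (θhat x j - θ0 (Function.update ψ i (ψ i)) j) * dp x ψ i) (ψ i) :=
          ((hasDerivAt_const (ψ i) (θhat x j)).sub h1).mul h2
        convert h3 using 1
        simp only [Function.update_eq_self]
        ring
      · intro ψ hψ hcase
        rw [hvanish x ψ hψ i hcase, mul_zero]
    have hsub : ∫ ψ in Set.Icc a b,
        ((θhat x j - θ0 ψ j) * dp x ψ i - D ψ j i * p x ψ)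
        = (∫ ψ in Set.Icc a b, (θhat x j - θ0 ψ j) * dp x ψ i)
          - ∫ ψ in Set.Icc a b, D ψ j i * p x ψ := integral_sub hint1 hint2
    have hscore' : (∫ ψ in Set.Icc a b, (θhat x j - θ0 ψ j) * s x ψ i * p x ψ)
        = ∫ ψ in Set.Icc a b, (θhat x j - θ0 ψ j) * dp x ψ i := by
      refine setIntegral_congr_fun measurableSet_Icc fun ψ hψ => ?_
      rw [hscore x ψ hψ i]
      ring
    rw [hscore']
    have := hftc
    rw [hsub] at this
    linarith
  -- Step 2: the quadratic form inequality
  have key : ∀ (c : Fin nθ → ℝ) (d : Fin (m+1) → ℝ),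
      0 ≤ (∑ j, ∑ k, c j * c k * E j k) + 2 * (∑ j, ∑ i, c j * d i * T j i)
        + (∑ i, ∑ i', d i * d i' * J i i') := by
    intro c d
    set v : (Fin nθ ⊕ Fin (m+1)) → ((Fin nx → ℝ) × (Fin (m+1) → ℝ)) → ℝ :=
      Sum.elim (fun j z => θhat z.1 j - θ0 z.2 j) (fun i z => s z.1 z.2 i) with hv
    set e : (Fin nθ ⊕ Fin (m+1)) → ℝ := Sum.elim c d with he
    have hintv : ∀ q q', Integrable (fun z => v q z * v q' z * p z.1 z.2) μ := by
      rintro (j | i) (k | i')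
      · exact hintE j k
      · exact hintCross j i'
      · refine (hintCross k i).congr (Filter.EventuallyEq.of_eq (funext fun z => ?_))
        simp only [hv, Sum.elim_inl, Sum.elim_inr]
        ring
      · exact hintJ i i'
    have h0 : 0 ≤ ∫ z, (∑ q, e q * v q z) * (∑ q', e q' * v q' z) * p z.1 z.2 ∂μ := by
      apply integral_nonneg
      intro z
      exact mul_nonneg (mul_self_nonneg _) (hp_nonneg _ _)
    have hCswap : ∀ (i : Fin (m+1)) (j : Fin nθ),
        (∫ z, s z.1 z.2 i * (θhat z.1 j - θ0 z.2 j) * p z.1 z.2 ∂μ) = T j i := by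
      intro i j
      rw [← hC j i]
      exact integral_congr_ae (Filter.EventuallyEq.of_eq (funext fun z => by ring))
    have h1 := h0.trans_eq (integral_sum_mul_sum_mul μ e v (fun z => p z.1 z.2) hintv)
    simp only [Fintype.sum_sum_type, he, hv, Sum.elim_inl, Sum.elim_inr] at h1
    simp only [← hE', ← hJ', hC, hCswap] at h1
    rw [Finset.sum_add_distrib, Finset.sum_add_distrib] at h1
    have hswap : (∑ i : Fin (m+1), ∑ k : Fin nθ, d i * c k * T k i)
        = ∑ j, ∑ i, c j * d i * T j i := by
      rw [Finset.sum_comm]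
      exact Finset.sum_congr rfl fun j _ => Finset.sum_congr rfl fun i _ => by ring
    rw [hswap] at h1
    linarith
  -- Step 3: conclude via the Schur-complement argument
  have hquad : ∀ {n1 n2 : ℕ} (M : Matrix (Fin n1) (Fin n2) ℝ) (c : Fin n1 → ℝ) (d : Fin n2 → ℝ),
      (∑ j, ∑ k, c j * d k * M j k) = c ⬝ᵥ (M *ᵥ d) := by
    intro n1 n2 M c d
    simp only [dotProduct, mulVec, Finset.mul_sum]
    exact Finset.sum_congr rfl fun j _ => Finset.sum_congr rfl fun k _ => by ring
  have hJt : Jᵀ = J := by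
    rw [← Matrix.conjTranspose_eq_transpose_of_trivial]
    exact hJpd.1
  have hJinvT : (J⁻¹)ᵀ = J⁻¹ := by rw [Matrix.transpose_nonsing_inv, hJt]
  have hdet : IsUnit J.det := isUnit_iff_ne_zero.2 hJpd.det_pos.ne'
  refine Matrix.posSemidef_iff_dotProduct_mulVec.mpr ⟨?_, ?_⟩
  · -- Hermitian part
    have hEt : Eᵀ = E := by
      ext j k
      rw [Matrix.transpose_apply, hE' k j, hE' j k]
      exact integral_congr_ae (Filter.EventuallyEq.of_eq (funext fun z => by ring))
    have hSt : (T * J⁻¹ * Tᵀ)ᵀ = T * J⁻¹ * Tᵀ := by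
      rw [Matrix.transpose_mul, Matrix.transpose_mul, Matrix.transpose_transpose, hJinvT,
        ← Matrix.mul_assoc]
    show (E - T * J⁻¹ * Tᵀ)ᴴ = E - T * J⁻¹ * Tᵀ
    rw [Matrix.conjTranspose_eq_transpose_of_trivial, Matrix.transpose_sub, hEt, hSt]
  · intro x
    set w : Fin (m+1) → ℝ := J⁻¹ *ᵥ (Tᵀ *ᵥ x) with hw
    have hkey := key x (-w)
    rw [hquad E x x, hquad T x (-w), hquad J (-w) (-w)] at hkey
    have hJw : J *ᵥ w = Tᵀ *ᵥ x := by
      rw [hw, Matrix.mulVec_mulVec, Matrix.mul_nonsing_inv _ hdet, Matrix.one_mulVec]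
    have hTw : T *ᵥ w = (T * J⁻¹ * Tᵀ) *ᵥ x := by
      rw [hw, Matrix.mulVec_mulVec, Matrix.mulVec_mulVec]
    have hdot : x ⬝ᵥ (T *ᵥ w) = w ⬝ᵥ (J *ᵥ w) := by
      rw [Matrix.dotProduct_mulVec, ← Matrix.mulVec_transpose, hJw, dotProduct_comm]
    simp only [Matrix.mulVec_neg, dotProduct_neg, neg_dotProduct, neg_neg] at hkey
    have hstar : star x = x := funext fun _ => rfl
    rw [hstar, Matrix.sub_mulVec, dotProduct_sub, ← hTw]
    linarith
end

section
/- Fix dimensions n_x, n ≥ 1. Let Ψ = ∏_{k=1}^{n} [a_k, b_k] be a compact box in ℝⁿ with a_k < b_k for all k. Let p : ℝ^{n_x} × ℝⁿ → ℝ be nonnegative with ∫∫_{ℝ^{n_x} × Ψ} p(x, ψ) dψ dx = 1, let θ̂ : ℝ^{n_x} → ℝⁿ be measurable, and let s : ℝ^{n_x} × ℝⁿ → ℝⁿ be measurable. Assume: (i) for each x and each i, ψ ↦ p(x, ψ) is continuous on Ψ with continuous partial derivative ∂p/∂ψ_i, and p(x, ψ) = 0 whenever ψ_i = a_i or ψ_i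 = b_i; (ii) ∂p/∂ψ_i(x, ψ) = s_i(x, ψ) p(x, ψ) for all (x, ψ) ∈ ℝ^{n_x} × Ψ and all i; (iii) all entries of (θ̂(x) − ψ)(θ̂(x) − ψ)ᵀ p(x, ψ), (θ̂(x) − ψ) s(x, ψ)ᵀ p(x, ψ), and s(x, ψ) s(x, ψ)ᵀ p(x, ψ) are integrable on ℝ^{n_x} × Ψ. If J = ∫∫ s(x, ψ) s(x, ψ)ᵀ p(x, ψ) dψ dx is positive definite, then ∫∫ (θ̂(x) − ψ)(θ̂(x) − ψ)ᵀ p(x, ψ) dψ dx − J⁻¹ is positive semidefinite. -/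
open Matrix MeasureTheory

/-- Splitting an integral over a box in `ℝ^{m+1}` into an iterated integral, with the
`j`-th coordinate integrated innermost. -/
private lemma split_integral {m : ℕ} (a b : Fin (m + 1) → ℝ) (j : Fin (m + 1))
    (f : (Fin (m + 1) → ℝ) → ℝ) (hf : IntegrableOn f (Set.Icc a b)) :
    ∫ ψ in Set.Icc a b, f ψ =
      ∫ y in Set.Icc (fun k => a (j.succAbove k)) (fun k => b (j.succAbove k)),
        ∫ t in Set.Icc (a j) (b j), f (j.insertNth t y) := by
  set φ := MeasurableEquiv.piFinSuccAbove (fun _ : Fin (m + 1) => ℝ) j with hφdef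
  have hφ : MeasurePreserving φ.symm volume volume :=
    (volume_preserving_piFinSuccAbove (fun _ : Fin (m + 1) => ℝ) j).symm φ
  have happ : ∀ z : ℝ × (Fin m → ℝ), φ.symm z = j.insertNth z.1 z.2 := fun z => rfl
  have hpre : φ.symm ⁻¹' (Set.Icc a b) =
      (Set.Icc (a j) (b j)) ×ˢ
        (Set.Icc (fun k => a (j.succAbove k)) (fun k => b (j.succAbove k))) := by
    ext z
    simp only [Set.mem_preimage, happ, Set.mem_prod, Fin.insertNth_mem_Icc]
  have hmp : MeasurePreserving φ.symm
      (((volume : Measure ℝ).restrict (Set.Icc (a j) (b j))).prod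
        ((volume : Measure (Fin m → ℝ)).restrict
          (Set.Icc (fun k => a (j.succAbove k)) (fun k => b (j.succAbove k)))))
      ((volume : Measure (Fin (m + 1) → ℝ)).restrict (Set.Icc a b)) := by
    have h := hφ.restrict_preimage (measurableSet_Icc (a := a) (b := b))
    rw [hpre] at h
    rwa [Measure.prod_restrict, ← Measure.volume_eq_prod]
  have hint2 : Integrable (fun z : ℝ × (Fin m → ℝ) => f (φ.symm z))
      (((volume : Measure ℝ).restrict (Set.Icc (a j) (b j))).prod
        ((volume : Measure (Fin m → ℝ)).restrict
          (Set.Icc (fun k => a (j.succAbove k)) (fun k => b (j.succAbove k))))) :=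
    (hmp.integrable_comp_emb φ.symm.measurableEmbedding).2 hf
  calc
    ∫ ψ in Set.Icc a b, f ψ
        = ∫ z, f (φ.symm z)
            ∂(((volume : Measure ℝ).restrict (Set.Icc (a j) (b j))).prod
              ((volume : Measure (Fin m → ℝ)).restrict
                (Set.Icc (fun k => a (j.succAbove k)) (fun k => b (j.succAbove k))))) :=
      (hmp.integral_comp φ.symm.measurableEmbedding f).symm
    _ = ∫ t in Set.Icc (a j) (b j),
          ∫ y in Set.Icc (fun k => a (j.succAbove k)) (fun k => b (j.succAbove k)),
            f (j.insertNth t y) := by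
      rw [integral_prod _ hint2]
      simp only [happ]
    _ = ∫ y in Set.Icc (fun k => a (j.succAbove k)) (fun k => b (j.succAbove k)),
          ∫ t in Set.Icc (a j) (b j), f (j.insertNth t y) :=
      integral_integral_swap hint2

/-- One-dimensional integration by parts inside a box: the key identity behind the
Bayesian Cramér–Rao bound. -/
private lemma part_integral {m : ℕ} (a b : Fin (m + 1) → ℝ) (hab : ∀ k, a k < b k)
    (c : ℝ) (i j : Fin (m + 1))
    (q : (Fin (m + 1) → ℝ) → ℝ) (dq : (Fin (m + 1) → ℝ) → Fin (m + 1) → ℝ)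
    (hq_cont : ContinuousOn q (Set.Icc a b))
    (hq_deriv : ∀ ψ ∈ Set.Icc a b, ∀ k : Fin (m + 1),
      HasDerivAt (fun t => q (Function.update ψ k t)) (dq ψ k) (ψ k))
    (hdq_cont : ContinuousOn (fun ψ => dq ψ j) (Set.Icc a b))
    (hvan : ∀ ψ ∈ Set.Icc a b, ∀ k : Fin (m + 1), (ψ k = a k ∨ ψ k = b k) → q ψ = 0) :
    ∫ ψ in Set.Icc a b, (c - ψ i) * dq ψ j
      = (if i = j then 1 else 0) * ∫ ψ in Set.Icc a b, q ψ := by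
  have habj : a j ≤ b j := (hab j).le
  have hg_cont : ContinuousOn (fun ψ => (c - ψ i) * dq ψ j) (Set.Icc a b) :=
    ((continuous_const.sub (continuous_apply i)).continuousOn).mul hdq_cont
  rw [split_integral a b j _ (hg_cont.integrableOn_Icc),
      split_integral a b j _ (hq_cont.integrableOn_Icc), ← integral_const_mul]
  refine setIntegral_congr_fun measurableSet_Icc (fun y hy => ?_)
  have hmem : ∀ t ∈ Set.Icc (a j) (b j), j.insertNth t y ∈ Set.Icc a b := fun t ht =>
    Fin.insertNth_mem_Icc.2 ⟨ht, hy⟩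
  have hup : ∀ t u : ℝ, Function.update (j.insertNth t y) j u
      = (j.insertNth u y : Fin (m + 1) → ℝ) := by
    intro t u
    funext k
    rcases eq_or_ne k j with rfl | hk
    · rw [Function.update_self]
      exact (Fin.insertNth_apply_same (α := fun _ => ℝ) k u y).symm
    · obtain ⟨l, rfl⟩ := Fin.exists_succAbove_eq hk
      rw [Function.update_of_ne (Fin.succAbove_ne j l), Fin.insertNth_apply_succAbove,
          Fin.insertNth_apply_succAbove]
  -- derivative of `t ↦ q (insertNth t y)`
  have hd : ∀ t ∈ Set.Icc (a j) (b j),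
      HasDerivAt (fun t => q (j.insertNth t y)) (dq (j.insertNth t y) j) t := by
    intro t ht
    have H := hq_deriv _ (hmem t ht) j
    rw [Fin.insertNth_apply_same] at H
    have e1 : (fun u => q (Function.update (j.insertNth t y) j u))
        = fun u => q (j.insertNth u y) := funext fun u => by rw [hup]
    rwa [e1] at H
  -- continuity facts
  have hins : Continuous (fun t : ℝ => (j.insertNth t y : Fin (m + 1) → ℝ)) := by
    have e : (fun t : ℝ => (j.insertNth t y : Fin (m + 1) → ℝ))
        = fun t => Function.update (j.insertNth (0 : ℝ) y : Fin (m + 1) → ℝ) j t := by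
      funext t
      exact (hup 0 t).symm
    rw [e]
    exact continuous_const.update j continuous_id
  have hmaps : Set.MapsTo (fun t : ℝ => j.insertNth t y)
      (Set.Icc (a j) (b j)) (Set.Icc a b) := hmem
  have hh_cont : ContinuousOn (fun t => q (j.insertNth t y)) (Set.Icc (a j) (b j)) :=
    hq_cont.comp hins.continuousOn hmaps
  have hh'_cont : ContinuousOn (fun t => dq (j.insertNth t y) j) (Set.Icc (a j) (b j)) :=
    hdq_cont.comp hins.continuousOn hmaps
  have hIih : IntervalIntegrable (fun t => q (j.insertNth t y)) volume (a j) (b j) :=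
    hh_cont.intervalIntegrable_of_Icc habj
  have hIih' : IntervalIntegrable (fun t => dq (j.insertNth t y) j) volume (a j) (b j) :=
    hh'_cont.intervalIntegrable_of_Icc habj
  -- vanishing at the endpoints
  have hajmem : a j ∈ Set.Icc (a j) (b j) := ⟨le_refl _, habj⟩
  have hbjmem : b j ∈ Set.Icc (a j) (b j) := ⟨habj, le_refl _⟩
  have ha0 : q (j.insertNth (a j) y) = 0 :=
    hvan _ (hmem _ hajmem) j (Or.inl (Fin.insertNth_apply_same (α := fun _ => ℝ) j (a j) y))
  have hb0 : q (j.insertNth (b j) y) = 0 :=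
    hvan _ (hmem _ hbjmem) j (Or.inr (Fin.insertNth_apply_same (α := fun _ => ℝ) j (b j) y))
  -- the fundamental theorem of calculus for the `j`-th coordinate
  have key0 : (∫ t in (a j)..(b j), dq (j.insertNth t y) j) = 0 := by
    rw [intervalIntegral.integral_eq_sub_of_hasDerivAt
        (f := fun t => q (j.insertNth t y))
        (fun t ht => hd t (by rwa [Set.uIcc_of_le habj] at ht)) hIih', hb0, ha0, sub_zero]
  by_cases hij : i = j
  · subst hij
    simp only [Fin.insertNth_apply_same, eq_self_iff_true, if_true, one_mul]
    rw [integral_Icc_eq_integral_Ioc, integral_Icc_eq_integral_Ioc,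
        ← intervalIntegral.integral_of_le habj, ← intervalIntegral.integral_of_le habj]
    -- integration by parts on `[a i, b i]`
    have hG : ∀ t ∈ Set.uIcc (a i) (b i),
        HasDerivAt (fun t => (c - t) * q (i.insertNth t y))
          ((-1) * q (i.insertNth t y) + (c - t) * dq (i.insertNth t y) i) t := by
      intro t ht
      rw [Set.uIcc_of_le habj] at ht
      exact ((hasDerivAt_id t).const_sub c).mul (hd t ht)
    have hch' : IntervalIntegrable (fun t => (c - t) * dq (i.insertNth t y) i)
        volume (a i) (b i) := by
      have : ContinuousOn (fun t => (c - t) * dq (i.insertNth t y) i)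
          (Set.Icc (a i) (b i)) :=
        ((continuous_const.sub continuous_id).continuousOn).mul hh'_cont
      exact this.intervalIntegrable_of_Icc habj
    have hzero : (∫ t in (a i)..(b i),
        ((-1) * q (i.insertNth t y) + (c - t) * dq (i.insertNth t y) i)) = 0 := by
      rw [intervalIntegral.integral_eq_sub_of_hasDerivAt hG ((hIih.const_mul (-1)).add hch'),
          hb0, ha0]
      ring
    rw [intervalIntegral.integral_add (hIih.const_mul (-1)) hch',
        intervalIntegral.integral_const_mul] at hzero
    linarith [hzero]
  · obtain ⟨k, hk⟩ := Fin.exists_succAbove_eq hij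
    have hconst : ∀ t : ℝ, (j.insertNth t y : Fin (m + 1) → ℝ) i = y k := fun t => by
      rw [← hk, Fin.insertNth_apply_succAbove]
    simp only [if_neg hij, zero_mul, hconst]
    rw [integral_Icc_eq_integral_Ioc, ← intervalIntegral.integral_of_le habj,
        intervalIntegral.integral_const_mul, key0, mul_zero]

private lemma expand_sq_sum {k : ℕ} (u v α β : Fin k → ℝ) (P : ℝ) :
    (∑ i, u i * α i - ∑ i, v i * β i) ^ 2 * P
      = (∑ i, ∑ j, (u i * u j) * (α i * α j * P))
        - 2 * (∑ i, ∑ j, (u i * v j) * (α i * β j * P))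
        + (∑ i, ∑ j, (v i * v j) * (β i * β j * P)) := by
  have expand : ∀ w w' γ γ' : Fin k → ℝ,
      (∑ i, w i * γ i) * (∑ j, w' j * γ' j) * P
        = ∑ i, ∑ j, (w i * w' j) * (γ i * γ' j * P) := by
    intro w w' γ γ'
    rw [Finset.sum_mul_sum, Finset.sum_mul]
    refine Finset.sum_congr rfl fun i _ => ?_
    rw [Finset.sum_mul]
    exact Finset.sum_congr rfl fun j _ => by ring
  have h : (∑ i, u i * α i - ∑ i, v i * β i) ^ 2 * P
      = (∑ i, u i * α i) * (∑ j, u j * α j) * P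
        - 2 * ((∑ i, u i * α i) * (∑ j, v j * β j) * P)
        + (∑ i, v i * β i) * (∑ j, v j * β j) * P := by ring
  rw [h, expand u u α α, expand u v α β, expand v v β β]

/-- When the model is correctly specified the pseudotrue parameter coincides with the
true parameter and the MBCRB of Theorem 1 reduces to the classical Bayesian
Cramér–Rao Bound: the error covariance of any estimator about `ψ` is bounded below
by the inverse Bayesian Fisher Information Matrix `J⁻¹`. -/
theorem stmt_14 (nx n : ℕ) (hnx : 1 ≤ nx) (hn : 1 ≤ n)
    (a b : Fin n → ℝ) (hab : ∀ k, a k < b k)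
    (p : (Fin nx → ℝ) → (Fin n → ℝ) → ℝ)
    (dp : (Fin nx → ℝ) → (Fin n → ℝ) → Fin n → ℝ)
    (θhat : (Fin nx → ℝ) → Fin n → ℝ)
    (s : (Fin nx → ℝ) → (Fin n → ℝ) → Fin n → ℝ)
    (hp_nonneg : ∀ x ψ, 0 ≤ p x ψ)
    (hp_mass : (∫ x : Fin nx → ℝ, ∫ ψ in Set.Icc a b, p x ψ) = 1)
    (hθhat_meas : Measurable θhat)
    (hs_meas : Measurable fun z : (Fin nx → ℝ) × (Fin n → ℝ) => s z.1 z.2)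
    -- (i) regularity of the joint density and vanishing on the faces of the box
    (hp_cont : ∀ x, ContinuousOn (p x) (Set.Icc a b))
    (hp_deriv : ∀ x, ∀ ψ ∈ Set.Icc a b, ∀ i : Fin n,
      HasDerivAt (fun t => p x (Function.update ψ i t)) (dp x ψ i) (ψ i))
    (hdp_cont : ∀ x, ∀ i : Fin n, ContinuousOn (fun ψ => dp x ψ i) (Set.Icc a b))
    (hvanish : ∀ x, ∀ ψ ∈ Set.Icc a b, ∀ i : Fin n,
      (ψ i = a i ∨ ψ i = b i) → p x ψ = 0)
    -- (ii) `s` is the score of `p`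
    (hscore : ∀ x, ∀ ψ ∈ Set.Icc a b, ∀ i : Fin n, dp x ψ i = s x ψ i * p x ψ)
    -- (iii) integrability of all matrix entries on ℝ^{n_x} × Ψ
    (hintE : ∀ i j : Fin n,
      Integrable (fun z : (Fin nx → ℝ) × (Fin n → ℝ) =>
        (θhat z.1 i - z.2 i) * (θhat z.1 j - z.2 j) * p z.1 z.2)
      ((volume : Measure (Fin nx → ℝ)).prod (volume.restrict (Set.Icc a b))))
    (hintCross : ∀ i j : Fin n,
      Integrable (fun z : (Fin nx → ℝ) × (Fin n → ℝ) =>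
        (θhat z.1 i - z.2 i) * s z.1 z.2 j * p z.1 z.2)
      ((volume : Measure (Fin nx → ℝ)).prod (volume.restrict (Set.Icc a b))))
    (hintJ : ∀ i j : Fin n,
      Integrable (fun z : (Fin nx → ℝ) × (Fin n → ℝ) =>
        s z.1 z.2 i * s z.1 z.2 j * p z.1 z.2)
      ((volume : Measure (Fin nx → ℝ)).prod (volume.restrict (Set.Icc a b))))
    (E : Matrix (Fin n) (Fin n) ℝ)
    (hE : E = Matrix.of fun i j => ∫ x : Fin nx → ℝ, ∫ ψ in Set.Icc a b,
      (θhat x i - ψ i) * (θhat x j - ψ j) * p x ψ)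
    (J : Matrix (Fin n) (Fin n) ℝ)
    (hJ : J = Matrix.of fun i j => ∫ x : Fin nx → ℝ, ∫ ψ in Set.Icc a b,
      s x ψ i * s x ψ j * p x ψ)
    (hJpd : J.PosDef) :
    (E - J⁻¹).PosSemidef := by
  obtain ⟨m, rfl⟩ : ∃ m, n = m + 1 := ⟨n - 1, (Nat.succ_pred_eq_of_pos hn).symm⟩
  set μ := ((volume : Measure (Fin nx → ℝ)).prod
    ((volume : Measure (Fin (m + 1) → ℝ)).restrict (Set.Icc a b))) with hμ
  -- matrix entries as integrals over the product measure
  have hEeq : ∀ i j : Fin (m + 1), E i j =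
      ∫ z : (Fin nx → ℝ) × (Fin (m + 1) → ℝ),
        (θhat z.1 i - z.2 i) * (θhat z.1 j - z.2 j) * p z.1 z.2 ∂μ := by
    intro i j
    simp only [hE, Matrix.of_apply]
    exact (integral_prod _ (hintE i j)).symm
  have hJeq : ∀ i j : Fin (m + 1), J i j =
      ∫ z : (Fin nx → ℝ) × (Fin (m + 1) → ℝ), s z.1 z.2 i * s z.1 z.2 j * p z.1 z.2 ∂μ := by
    intro i j
    simp only [hJ, Matrix.of_apply]
    exact (integral_prod _ (hintJ i j)).symm
  -- the cross term equals the identity matrix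
  have hCross : ∀ i j : Fin (m + 1),
      (∫ z : (Fin nx → ℝ) × (Fin (m + 1) → ℝ),
        (θhat z.1 i - z.2 i) * s z.1 z.2 j * p z.1 z.2 ∂μ) = if i = j then 1 else 0 := by
    intro i j
    rw [integral_prod _ (hintCross i j)]
    have hx1 : ∀ x : Fin nx → ℝ,
        (∫ ψ in Set.Icc a b, (θhat x i - ψ i) * s x ψ j * p x ψ)
          = (if i = j then 1 else 0) * ∫ ψ in Set.Icc a b, p x ψ := by
      intro x
      have e1 : (∫ ψ in Set.Icc a b, (θhat x i - ψ i) * s x ψ j * p x ψ)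
          = ∫ ψ in Set.Icc a b, (θhat x i - ψ i) * dp x ψ j :=
        setIntegral_congr_fun measurableSet_Icc fun ψ hψ => by
          rw [hscore x ψ hψ j]; ring
      rw [e1, part_integral a b hab (θhat x i) i j (p x) (dp x) (hp_cont x)
        (hp_deriv x) (hdp_cont x j) (hvanish x)]
    simp only [hx1]
    by_cases hij : i = j
    · simp only [if_pos hij, one_mul]
      exact hp_mass
    · simp only [if_neg hij, zero_mul, integral_zero]
  -- Hermitian parts
  have hJher : J.IsHermitian := hJpd.1
  have hdet : IsUnit J.det := isUnit_iff_ne_zero.2 hJpd.det_pos.ne'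
  have hJinv_her : (J⁻¹).IsHermitian := hJher.inv
  have hEher : E.IsHermitian := by
    refine Matrix.IsHermitian.ext fun i j => ?_
    simp only [hE, Matrix.of_apply, star_trivial]
    exact integral_congr_ae (Filter.Eventually.of_forall fun x =>
      integral_congr_ae (Filter.Eventually.of_forall fun ψ => by ring))
  refine posSemidef_iff_dotProduct_mulVec.2 ⟨hEher.sub hJinv_her, fun u => ?_⟩
  have hstar : star u = u := by
    funext i
    simp
  rw [hstar]
  set v : Fin (m + 1) → ℝ := J⁻¹ *ᵥ u with hv
  -- nonnegativity of the Gram form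
  have hQ : 0 ≤ ∫ z : (Fin nx → ℝ) × (Fin (m + 1) → ℝ),
      (∑ i, u i * (θhat z.1 i - z.2 i) - ∑ i, v i * s z.1 z.2 i) ^ 2 * p z.1 z.2 ∂μ :=
    integral_nonneg fun z => mul_nonneg (sq_nonneg _) (hp_nonneg _ _)
  -- integrability of each expanded piece
  have hint1 : Integrable (fun z : (Fin nx → ℝ) × (Fin (m + 1) → ℝ) =>
      ∑ i, ∑ j, (u i * u j) *
        ((θhat z.1 i - z.2 i) * (θhat z.1 j - z.2 j) * p z.1 z.2)) μ :=
    integrable_finset_sum _ fun i _ =>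
      integrable_finset_sum _ fun j _ => (hintE i j).const_mul _
  have hint2 : Integrable (fun z : (Fin nx → ℝ) × (Fin (m + 1) → ℝ) =>
      ∑ i, ∑ j, (u i * v j) *
        ((θhat z.1 i - z.2 i) * s z.1 z.2 j * p z.1 z.2)) μ :=
    integrable_finset_sum _ fun i _ =>
      integrable_finset_sum _ fun j _ => (hintCross i j).const_mul _
  have hint3 : Integrable (fun z : (Fin nx → ℝ) × (Fin (m + 1) → ℝ) =>
      ∑ i, ∑ j, (v i * v j) * (s z.1 z.2 i * s z.1 z.2 j * p z.1 z.2)) μ :=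
    integrable_finset_sum _ fun i _ =>
      integrable_finset_sum _ fun j _ => (hintJ i j).const_mul _
  -- value of each expanded piece
  have hval1 : (∫ z : (Fin nx → ℝ) × (Fin (m + 1) → ℝ),
      ∑ i, ∑ j, (u i * u j) *
        ((θhat z.1 i - z.2 i) * (θhat z.1 j - z.2 j) * p z.1 z.2) ∂μ)
      = ∑ i, ∑ j, (u i * u j) * E i j := by
    rw [integral_finset_sum _ (fun i _ =>
      integrable_finset_sum _ fun j _ => (hintE i j).const_mul _)]
    refine Finset.sum_congr rfl fun i _ => ?_
    rw [integral_finset_sum _ (fun j _ => (hintE i j).const_mul _)]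
    refine Finset.sum_congr rfl fun j _ => ?_
    rw [integral_const_mul, hEeq i j]
  have hval2 : (∫ z : (Fin nx → ℝ) × (Fin (m + 1) → ℝ),
      ∑ i, ∑ j, (u i * v j) *
        ((θhat z.1 i - z.2 i) * s z.1 z.2 j * p z.1 z.2) ∂μ)
      = ∑ i, u i * v i := by
    rw [integral_finset_sum _ (fun i _ =>
      integrable_finset_sum _ fun j _ => (hintCross i j).const_mul _)]
    refine Finset.sum_congr rfl fun i _ => ?_
    rw [integral_finset_sum _ (fun j _ => (hintCross i j).const_mul _)]
    have : ∀ j ∈ Finset.univ, (∫ z : (Fin nx → ℝ) × (Fin (m + 1) → ℝ),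
        (u i * v j) * ((θhat z.1 i - z.2 i) * s z.1 z.2 j * p z.1 z.2) ∂μ)
        = (u i * v j) * (if i = j then 1 else 0) := fun j _ => by
      rw [integral_const_mul, hCross i j]
    rw [Finset.sum_congr rfl this]
    simp [Finset.sum_ite_eq]
  have hval3 : (∫ z : (Fin nx → ℝ) × (Fin (m + 1) → ℝ),
      ∑ i, ∑ j, (v i * v j) * (s z.1 z.2 i * s z.1 z.2 j * p z.1 z.2) ∂μ)
      = ∑ i, ∑ j, (v i * v j) * J i j := by
    rw [integral_finset_sum _ (fun i _ =>
      integrable_finset_sum _ fun j _ => (hintJ i j).const_mul _)]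
    refine Finset.sum_congr rfl fun i _ => ?_
    rw [integral_finset_sum _ (fun j _ => (hintJ i j).const_mul _)]
    refine Finset.sum_congr rfl fun j _ => ?_
    rw [integral_const_mul, hJeq i j]
  -- expansion of the quadratic form
  have hQval : (∫ z : (Fin nx → ℝ) × (Fin (m + 1) → ℝ),
      (∑ i, u i * (θhat z.1 i - z.2 i) - ∑ i, v i * s z.1 z.2 i) ^ 2 * p z.1 z.2 ∂μ)
      = (∑ i, ∑ j, (u i * u j) * E i j) - 2 * (∑ i, u i * v i)
        + (∑ i, ∑ j, (v i * v j) * J i j) := by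
    have hexp : ∀ z : (Fin nx → ℝ) × (Fin (m + 1) → ℝ),
        (∑ i, u i * (θhat z.1 i - z.2 i) - ∑ i, v i * s z.1 z.2 i) ^ 2 * p z.1 z.2
          = (∑ i, ∑ j, (u i * u j) *
              ((θhat z.1 i - z.2 i) * (θhat z.1 j - z.2 j) * p z.1 z.2))
            - 2 * (∑ i, ∑ j, (u i * v j) *
              ((θhat z.1 i - z.2 i) * s z.1 z.2 j * p z.1 z.2))
            + (∑ i, ∑ j, (v i * v j) * (s z.1 z.2 i * s z.1 z.2 j * p z.1 z.2)) :=
      fun z => expand_sq_sum u v (fun i => θhat z.1 i - z.2 i) (fun i => s z.1 z.2 i)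
        (p z.1 z.2)
    have hint2' : Integrable (fun z : (Fin nx → ℝ) × (Fin (m + 1) → ℝ) =>
        2 * ∑ i, ∑ j, (u i * v j) *
          ((θhat z.1 i - z.2 i) * s z.1 z.2 j * p z.1 z.2)) μ := hint2.const_mul 2
    have hint12 : Integrable (fun z : (Fin nx → ℝ) × (Fin (m + 1) → ℝ) =>
        (∑ i, ∑ j, (u i * u j) *
          ((θhat z.1 i - z.2 i) * (θhat z.1 j - z.2 j) * p z.1 z.2))
        - 2 * ∑ i, ∑ j, (u i * v j) *
          ((θhat z.1 i - z.2 i) * s z.1 z.2 j * p z.1 z.2)) μ := hint1.sub hint2'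
    rw [integral_congr_ae (Filter.Eventually.of_forall hexp),
        integral_add hint12 hint3,
        integral_sub hint1 hint2', integral_const_mul,
        hval1, hval2, hval3]
  rw [hQval] at hQ
  -- translate sums into matrix-vector algebra
  have hS1 : (∑ i, ∑ j, (u i * u j) * E i j) = u ⬝ᵥ (E *ᵥ u) := by
    simp only [dotProduct, mulVec, Finset.mul_sum]
    exact Finset.sum_congr rfl fun i _ => Finset.sum_congr rfl fun j _ => by ring
  have hS3 : (∑ i, ∑ j, (v i * v j) * J i j) = v ⬝ᵥ (J *ᵥ v) := by
    simp only [dotProduct, mulVec, Finset.mul_sum]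
    exact Finset.sum_congr rfl fun i _ => Finset.sum_congr rfl fun j _ => by ring
  have hS2 : (∑ i, u i * v i) = u ⬝ᵥ v := rfl
  have hJv : J *ᵥ v = u := by
    rw [hv, Matrix.mulVec_mulVec, Matrix.mul_nonsing_inv _ hdet, Matrix.one_mulVec]
  have hvJv : v ⬝ᵥ (J *ᵥ v) = u ⬝ᵥ v := by
    rw [hJv, dotProduct_comm]
  have huv : u ⬝ᵥ v = u ⬝ᵥ (J⁻¹ *ᵥ u) := rfl
  rw [hS1, hS2, hS3, hvJv, huv] at hQ
  have hfinal : u ⬝ᵥ ((E - J⁻¹) *ᵥ u)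
      = u ⬝ᵥ (E *ᵥ u) - 2 * (u ⬝ᵥ (J⁻¹ *ᵥ u)) + u ⬝ᵥ (J⁻¹ *ᵥ u) := by
    rw [Matrix.sub_mulVec, dotProduct_sub]
    ring
  rw [hfinal]
  exact hQ
end
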